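/- Let α = 3.5, β > 2, a > 0, Υ ≥ 0 and λ_MT > 0. Let f(λ) = 1 − (1 + λ_MT/(α·λ))^(−α) and h(λ) = 1 − exp(−a·λ·(1 + Υ·f(λ))) for λ > 0. Then the function W₁(λ) = −(f(λ)/f'(λ))·(h'(λ)/h(λ)) is nonnegative and nonincreasing on the set {λ > 0 : λ_MT/λ ≥ 2α/(α−1) = 2.8}. -/

import Mathlib

open Real Filter Set Topology

noncomputable def uu (lMT l : ℝ) : ℝ := 1 + lMT / (3.5 * l)
noncomputable def f0 (lMT l : ℝ) : ℝ := 1 - uu lMT l ^ (-(3.5:ℝ))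
noncomputable def fd (lMT l : ℝ) : ℝ := -(lMT / l ^ 2 * uu lMT l ^ (-(4.5:ℝ)))

lemma uu_gt_one {lMT l : ℝ} (hMT : 0 < lMT) (hl : 0 < l) : 1 < uu lMT l := by
  have : 0 < lMT / (3.5 * l) := by positivity
  simp only [uu]; linarith

lemma uu_pos {lMT l : ℝ} (hMT : 0 < lMT) (hl : 0 < l) : 0 < uu lMT l :=
  lt_trans one_pos (uu_gt_one hMT hl)

lemma hasDerivAt_uu (lMT : ℝ) {l : ℝ} (hl : l ≠ 0) :
    HasDerivAt (fun x => uu lMT x) (-(lMT / (3.5 * l ^ 2))) l := by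
  have h1 : HasDerivAt (fun x : ℝ => 1 + lMT / 3.5 * x⁻¹) (lMT / 3.5 * (-(l ^ 2)⁻¹)) l :=
    ((hasDerivAt_inv hl).const_mul (lMT / 3.5)).const_add 1
  convert h1 using 1
  · funext x
    simp only [uu]
    rw [div_eq_mul_inv lMT (3.5 * x), mul_inv]
    ring
  · rw [div_eq_mul_inv lMT (3.5 * l ^ 2), mul_inv]
    ring

lemma hasDerivAt_f0 {lMT l : ℝ} (hMT : 0 < lMT) (hl : 0 < l) :
    HasDerivAt (fun x => f0 lMT x) (fd lMT l) l := by
  have h1 := (hasDerivAt_uu lMT hl.ne').rpow_const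
    (p := (-(3.5:ℝ))) (Or.inl (uu_pos hMT hl).ne')
  have h2 := h1.const_sub 1
  refine h2.congr_deriv ?_
  rw [show ((-(3.5:ℝ)) - 1) = -(4.5:ℝ) by norm_num]
  simp only [fd]
  field_simp

lemma uu_rpow_pos {lMT l : ℝ} (hMT : 0 < lMT) (hl : 0 < l) (p : ℝ) :
    0 < uu lMT l ^ p := rpow_pos_of_pos (uu_pos hMT hl) p

lemma f0_pos {lMT l : ℝ} (hMT : 0 < lMT) (hl : 0 < l) : 0 < f0 lMT l := by
  have h1 : uu lMT l ^ (-(3.5:ℝ)) < 1 :=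
    rpow_lt_one_of_one_lt_of_neg (uu_gt_one hMT hl) (by norm_num)
  simp only [f0]; linarith

-- u^{4.5} = u * u^{3.5},  u^{4.5} * u^{-4.5} = 1, etc.
lemma uu_rpow_split {lMT l : ℝ} (hMT : 0 < lMT) (hl : 0 < l) :
    uu lMT l ^ (4.5:ℝ) = uu lMT l * uu lMT l ^ (3.5:ℝ) := by
  rw [show (4.5:ℝ) = 1 + 3.5 by norm_num, rpow_add (uu_pos hMT hl), rpow_one]

lemma uu_rpow_mul_inv {lMT l : ℝ} (hMT : 0 < lMT) (hl : 0 < l) :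
    uu lMT l ^ (4.5:ℝ) * uu lMT l ^ (-(4.5:ℝ)) = 1 := by
  rw [← rpow_add (uu_pos hMT hl)]; norm_num

lemma uu_rpow_one_sub {lMT l : ℝ} (hMT : 0 < lMT) (hl : 0 < l) :
    uu lMT l * uu lMT l ^ (-(4.5:ℝ)) = uu lMT l ^ (-(3.5:ℝ)) := by
  nth_rewrite 1 [show uu lMT l = uu lMT l ^ (1:ℝ) from (rpow_one _).symm]
  rw [← rpow_add (uu_pos hMT hl)]; norm_num

-- Bernoulli :  u^{4.5} ≥ u + lMT/l
lemma bernoulli_key {lMT l : ℝ} (hMT : 0 < lMT) (hl : 0 < l) :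
    uu lMT l + lMT / l ≤ uu lMT l ^ (4.5:ℝ) := by
  have hs : (0:ℝ) ≤ lMT / (3.5 * l) := by positivity
  have h := one_add_mul_self_le_rpow_one_add (s := lMT / (3.5 * l)) (by linarith)
    (p := (4.5:ℝ)) (by norm_num)
  have he : lMT / l = 3.5 * (lMT / (3.5 * l)) := by field_simp
  simp only [uu]
  rw [he]
  calc 1 + lMT / (3.5 * l) + 3.5 * (lMT / (3.5 * l))
      = 1 + 4.5 * (lMT / (3.5 * l)) := by ring
    _ ≤ (1 + lMT / (3.5 * l)) ^ (4.5:ℝ) := h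

-- f0 written with u^{4.5}
lemma f0_eq {lMT l : ℝ} (hMT : 0 < lMT) (hl : 0 < l) :
    f0 lMT l = (uu lMT l ^ (4.5:ℝ) - uu lMT l) * uu lMT l ^ (-(4.5:ℝ)) := by
  rw [sub_mul, uu_rpow_mul_inv hMT hl, uu_rpow_one_sub hMT hl]; rfl

-- the key positivity for g' :  f0 - (lMT/l) u^{-4.5} ≥ 0
lemma f0_ge {lMT l : ℝ} (hMT : 0 < lMT) (hl : 0 < l) :
    lMT / l * uu lMT l ^ (-(4.5:ℝ)) ≤ f0 lMT l := by
  rw [f0_eq hMT hl]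
  have hb := bernoulli_key hMT hl
  have hp : (0:ℝ) < uu lMT l ^ (-(4.5:ℝ)) := uu_rpow_pos hMT hl _
  nlinarith [hp.le]

noncomputable def g0 (a Υ lMT l : ℝ) : ℝ := a * l * (1 + Υ * f0 lMT l)
noncomputable def N0 (a Υ lMT l : ℝ) : ℝ :=
  a * (1 + Υ * f0 lMT l) + a * l * (Υ * fd lMT l)
noncomputable def A0 (lMT l : ℝ) : ℝ :=
  l ^ 2 * (uu lMT l ^ (4.5:ℝ) - uu lMT l) / lMT

lemma hasDerivAt_g0 {a Υ lMT l : ℝ} (hMT : 0 < lMT) (hl : 0 < l) :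
    HasDerivAt (fun x => g0 a Υ lMT x) (N0 a Υ lMT l) l := by
  have hc : HasDerivAt (fun x : ℝ => a * x) (a * 1) l := (hasDerivAt_id l).const_mul a
  have hd : HasDerivAt (fun x => 1 + Υ * f0 lMT x) (Υ * fd lMT l) l :=
    ((hasDerivAt_f0 hMT hl).const_mul Υ).const_add 1
  have := hc.mul hd
  refine this.congr_deriv ?_
  simp only [N0]; ring

lemma N0_ge {a Υ lMT l : ℝ} (ha : 0 < a) (hΥ : 0 ≤ Υ) (hMT : 0 < lMT) (hl : 0 < l) :
    a ≤ N0 a Υ lMT l := by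
  have hld : l * fd lMT l = -(lMT / l * uu lMT l ^ (-(4.5:ℝ))) := by
    simp only [fd]; field_simp
  have h1 := f0_ge hMT hl
  have h2 : 0 ≤ Υ * (f0 lMT l - lMT / l * uu lMT l ^ (-(4.5:ℝ))) :=
    mul_nonneg hΥ (by linarith)
  have : N0 a Υ lMT l = a + a * (Υ * (f0 lMT l - lMT / l * uu lMT l ^ (-(4.5:ℝ)))) := by
    simp only [N0]
    have : a * l * (Υ * fd lMT l) = a * Υ * (l * fd lMT l) := by ring
    rw [this, hld]; ring
  rw [this]
  nlinarith

lemma hasDerivAt_fd {lMT l : ℝ} (hMT : 0 < lMT) (hl : 0 < l) :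
    HasDerivAt (fun x => fd lMT x)
      (2 * lMT / l ^ 3 * uu lMT l ^ (-(4.5:ℝ))
        - 4.5 / 3.5 * (lMT ^ 2 / l ^ 4) * uu lMT l ^ (-(5.5:ℝ))) l := by
  have hc : HasDerivAt (fun x : ℝ => lMT * (x ^ 2)⁻¹)
      (lMT * (-(2 * l ^ 1) / (l ^ 2) ^ 2)) l := by
    have := ((hasDerivAt_pow 2 l).inv (pow_ne_zero 2 hl.ne')).const_mul lMT
    exact this.congr_deriv (by norm_num)
  have hd := (hasDerivAt_uu lMT hl.ne').rpow_const
    (p := (-(4.5:ℝ))) (Or.inl (uu_pos hMT hl).ne')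
  have := (hc.mul hd).neg
  have hfe : (fun x => fd lMT x) = fun x => -(lMT * (x ^ 2)⁻¹ * uu lMT x ^ (-(4.5:ℝ))) := by
    funext x; simp only [fd, div_eq_mul_inv]
  rw [hfe]
  refine this.congr_deriv ?_
  rw [show ((-(4.5:ℝ)) - 1) = -(5.5:ℝ) by norm_num]
  field_simp
  ring

lemma hasDerivAt_N0 {a Υ lMT l : ℝ} (hMT : 0 < lMT) (hl : 0 < l) :
    HasDerivAt (fun x => N0 a Υ lMT x)
      (-(a * Υ * (4.5 / 3.5) * (lMT ^ 2 / l ^ 3) * uu lMT l ^ (-(5.5:ℝ)))) l := by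
  have p1 : HasDerivAt (fun x => a * (1 + Υ * f0 lMT x)) (a * (Υ * fd lMT l)) l :=
    (((hasDerivAt_f0 hMT hl).const_mul Υ).const_add 1).const_mul a
  have hc : HasDerivAt (fun x : ℝ => a * x) (a * 1) l := (hasDerivAt_id l).const_mul a
  have hd := (hasDerivAt_fd hMT hl).const_mul Υ
  have p2 := hc.mul hd
  have := p1.add p2
  refine this.congr_deriv ?_
  simp only [fd]
  field_simp
  ring

lemma hasDerivAt_A0 {lMT l : ℝ} (hMT : 0 < lMT) (hl : 0 < l) :
    HasDerivAt (fun x => A0 lMT x)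
      ((2 * l * (uu lMT l ^ (4.5:ℝ) - uu lMT l)) / lMT
        - (4.5 * uu lMT l ^ (3.5:ℝ) - 1) / 3.5) l := by
  have p1 := (hasDerivAt_uu lMT hl.ne').rpow_const
    (p := (4.5:ℝ)) (Or.inl (uu_pos hMT hl).ne')
  have p2 := p1.sub (hasDerivAt_uu lMT hl.ne')
  have q := ((hasDerivAt_pow 2 l).mul p2).div_const lMT
  have hfe : (fun x => A0 lMT x)
      = fun x => x ^ 2 * (uu lMT x ^ (4.5:ℝ) - uu lMT x) / lMT := by
    funext x; simp only [A0]
  rw [hfe]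
  refine q.congr_deriv ?_
  rw [show ((4.5:ℝ) - 1) = (3.5:ℝ) by norm_num]
  simp only [Pi.sub_apply]
  field_simp
  ring

lemma A0_deriv_nonpos {lMT l : ℝ} (hMT : 0 < lMT) (hl : 0 < l) (hcond : 2.8 * l ≤ lMT) :
    (2 * l * (uu lMT l ^ (4.5:ℝ) - uu lMT l)) / lMT
      - (4.5 * uu lMT l ^ (3.5:ℝ) - 1) / 3.5 ≤ 0 := by
  set v : ℝ := lMT / (3.5 * l) with hv_def
  have hv : (0.8:ℝ) ≤ v := by
    rw [hv_def, le_div_iff₀ (by positivity)]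
    nlinarith
  have hP : (0:ℝ) ≤ uu lMT l ^ (3.5:ℝ) := (uu_rpow_pos hMT hl _).le
  set P : ℝ := uu lMT l ^ (3.5:ℝ) with hP_def
  have huv : uu lMT l = 1 + v := rfl
  have hQ : uu lMT l ^ (4.5:ℝ) = uu lMT l * P := uu_rpow_split hMT hl
  have hlMT : lMT = 3.5 * l * v := by
    rw [hv_def]; field_simp
  rw [hQ, huv, sub_nonpos, hlMT, div_le_div_iff₀ (by positivity) (by norm_num : (0:ℝ) < 3.5)]
  nlinarith [mul_nonneg (mul_nonneg hl.le hP) (by linarith : (0:ℝ) ≤ 2.5 * v - 2),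
    mul_nonneg hl.le (by linarith : (0:ℝ) ≤ v + 2)]

lemma antitoneOn_A0 {lMT : ℝ} (hMT : 0 < lMT) :
    AntitoneOn (fun l => A0 lMT l) (Ioc 0 (lMT / 2.8)) := by
  apply antitoneOn_of_deriv_nonpos (convex_Ioc _ _)
  · exact fun l hl => (hasDerivAt_A0 hMT hl.1).continuousAt.continuousWithinAt
  · rw [interior_Ioc]
    exact fun l hl => (hasDerivAt_A0 hMT hl.1).differentiableAt.differentiableWithinAt
  · rw [interior_Ioc]
    intro l hl
    rw [(hasDerivAt_A0 hMT hl.1).deriv]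
    have h2 : l * 2.8 < lMT := by
      have := hl.2
      rwa [lt_div_iff₀ (by norm_num : (0:ℝ) < 2.8)] at this
    exact A0_deriv_nonpos hMT hl.1 (by linarith)

lemma antitoneOn_N0 {a Υ lMT : ℝ} (ha : 0 < a) (hΥ : 0 ≤ Υ) (hMT : 0 < lMT) :
    AntitoneOn (fun l => N0 a Υ lMT l) (Ioc 0 (lMT / 2.8)) := by
  apply antitoneOn_of_deriv_nonpos (convex_Ioc _ _)
  · exact fun l hl => (hasDerivAt_N0 hMT hl.1).continuousAt.continuousWithinAt
  · rw [interior_Ioc]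
    exact fun l hl => (hasDerivAt_N0 hMT hl.1).differentiableAt.differentiableWithinAt
  · rw [interior_Ioc]
    intro l hl
    rw [(hasDerivAt_N0 hMT hl.1).deriv, neg_nonpos]
    apply mul_nonneg (mul_nonneg (mul_nonneg (mul_nonneg ha.le hΥ) (by norm_num))
      (div_nonneg (sq_nonneg lMT) (pow_nonneg hl.1.le 3))) (uu_rpow_pos hMT hl.1 _).le

lemma monotoneOn_g0 {a Υ lMT : ℝ} (ha : 0 < a) (hΥ : 0 ≤ Υ) (hMT : 0 < lMT) :
    MonotoneOn (fun l => g0 a Υ lMT l) (Ioc 0 (lMT / 2.8)) := by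
  apply monotoneOn_of_deriv_nonneg (convex_Ioc _ _)
  · exact fun l hl => (hasDerivAt_g0 hMT hl.1).continuousAt.continuousWithinAt
  · rw [interior_Ioc]
    exact fun l hl => (hasDerivAt_g0 hMT hl.1).differentiableAt.differentiableWithinAt
  · rw [interior_Ioc]
    intro l hl
    rw [(hasDerivAt_g0 hMT hl.1).deriv]
    linarith [N0_ge ha hΥ hMT hl.1]

lemma g0_pos {a Υ lMT l : ℝ} (ha : 0 < a) (hΥ : 0 ≤ Υ) (hMT : 0 < lMT) (hl : 0 < l) :
    0 < g0 a Υ lMT l := by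
  have h1 := f0_pos hMT hl
  have : (0:ℝ) < 1 + Υ * f0 lMT l := by nlinarith
  simp only [g0]; positivity

lemma expg_sub_one_pos {a Υ lMT l : ℝ} (ha : 0 < a) (hΥ : 0 ≤ Υ) (hMT : 0 < lMT)
    (hl : 0 < l) : 0 < Real.exp (g0 a Υ lMT l) - 1 := by
  have := Real.exp_lt_exp.2 (g0_pos ha hΥ hMT hl)
  rw [Real.exp_zero] at this
  linarith

lemma A0_nonneg {lMT l : ℝ} (hMT : 0 < lMT) (hl : 0 < l) : 0 ≤ A0 lMT l := by
  have h1 := bernoulli_key hMT hl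
  have h2 : (0:ℝ) < lMT / l := by positivity
  have : 0 ≤ uu lMT l ^ (4.5:ℝ) - uu lMT l := by linarith
  simp only [A0]; positivity

lemma hasDerivAt_h0 {a Υ lMT l : ℝ} (hMT : 0 < lMT) (hl : 0 < l) :
    HasDerivAt (fun x => 1 - Real.exp (-(g0 a Υ lMT x)))
      (N0 a Υ lMT l * Real.exp (-(g0 a Υ lMT l))) l := by
  have := (((hasDerivAt_g0 (a := a) (Υ := Υ) hMT hl).neg).exp).const_sub 1
  refine this.congr_deriv ?_
  simp only [Pi.neg_apply]
  ring

lemma fd_neg {lMT l : ℝ} (hMT : 0 < lMT) (hl : 0 < l) : fd lMT l < 0 := by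
  have h1 : 0 < lMT / l ^ 2 * uu lMT l ^ (-(4.5:ℝ)) :=
    mul_pos (by positivity) (uu_rpow_pos hMT hl _)
  simp only [fd]; linarith

/-- Appendix C of the paper: the first term
`W₁(λ) = −(f(λ)/f'(λ))·(h'(λ)/h(λ))` of the right-hand side of the stationary
equation for energy-efficiency maximization in the density is nonnegative and
nonincreasing on `{λ > 0 : λ_MT/λ ≥ 2α/(α−1) = 2.8}`, where
`f(λ) = 1 − (1 + λ_MT/(α·λ))^(−α)`, `h(λ) = 1 − exp(−a·λ·(1 + Υ·f(λ)))`,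
`α = 3.5`, `a > 0`, `Υ ≥ 0`. -/
theorem stationary_density_first_term_antitone (α β a Υ lMT : ℝ)
    (hα : α = 3.5) (hβ : 2 < β) (ha : 0 < a) (hΥ : 0 ≤ Υ) (hMT : 0 < lMT)
    (f h W₁ : ℝ → ℝ)
    (hf : ∀ l : ℝ, f l = 1 - (1 + lMT / (α * l)) ^ (-α))
    (hh : ∀ l : ℝ, h l = 1 - Real.exp (-(a * l * (1 + Υ * f l))))
    (hW : ∀ l : ℝ, W₁ l = -(f l / deriv f l) * (deriv h l / h l)) :
    (∀ l : ℝ, 0 < l → 2 * α / (α - 1) ≤ lMT / l → 0 ≤ W₁ l) ∧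
    AntitoneOn W₁ {l : ℝ | 0 < l ∧ 2 * α / (α - 1) ≤ lMT / l} := by
  subst hα
  have hfe : f = fun x => f0 lMT x := by
    funext l; simp only [f0, uu]; exact hf l
  have hhe : h = fun x => 1 - Real.exp (-(g0 a Υ lMT x)) := by
    funext l; simp only [hh l, hfe, g0]
  have hdf : ∀ l : ℝ, 0 < l → deriv f l = fd lMT l := fun l hl => by
    rw [hfe]; exact (hasDerivAt_f0 hMT hl).deriv
  have hdh : ∀ l : ℝ, 0 < l →
      deriv h l = N0 a Υ lMT l * Real.exp (-(g0 a Υ lMT l)) := fun l hl => by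
    rw [hhe]; exact (hasDerivAt_h0 hMT hl).deriv
  have Weq : ∀ l : ℝ, 0 < l →
      W₁ l = A0 lMT l * (N0 a Υ lMT l / (Real.exp (g0 a Υ lMT l) - 1)) := by
    intro l hl
    have e1 : -(f0 lMT l / fd lMT l) = A0 lMT l := by
      have hne4 : uu lMT l ^ (-(4.5:ℝ)) ≠ 0 := (uu_rpow_pos hMT hl _).ne'
      rw [f0_eq hMT hl]
      simp only [fd, A0]
      rw [div_neg, neg_neg]
      field_simp
    have e2 : N0 a Υ lMT l * Real.exp (-(g0 a Υ lMT l)) / (1 - Real.exp (-(g0 a Υ lMT l)))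
        = N0 a Υ lMT l / (Real.exp (g0 a Υ lMT l) - 1) := by
      have key : 1 - Real.exp (-(g0 a Υ lMT l))
          = (Real.exp (g0 a Υ lMT l) - 1) * Real.exp (-(g0 a Υ lMT l)) := by
        rw [sub_mul, ← Real.exp_add]; simp
      rw [key, mul_div_mul_right _ _ (Real.exp_ne_zero _)]
    calc W₁ l = -(f l / deriv f l) * (deriv h l / h l) := hW l
      _ = -(f0 lMT l / fd lMT l)
            * (N0 a Υ lMT l * Real.exp (-(g0 a Υ lMT l)) / (1 - Real.exp (-(g0 a Υ lMT l)))) := by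
          rw [hdf l hl, hdh l hl, hfe, hhe]
      _ = A0 lMT l * (N0 a Υ lMT l / (Real.exp (g0 a Υ lMT l) - 1)) := by rw [e1, e2]
  have hc : (2 * 3.5 / (3.5 - 1) : ℝ) = 2.8 := by norm_num
  have hmem : ∀ x : ℝ, 0 < x → (2.8:ℝ) ≤ lMT / x → x ∈ Ioc (0:ℝ) (lMT / 2.8) := by
    intro x hx1 hx2
    refine ⟨hx1, ?_⟩
    rw [le_div_iff₀ (by norm_num : (0:ℝ) < 2.8)]
    have := (le_div_iff₀ hx1).1 hx2
    linarith
  have hB0nn : ∀ l : ℝ, 0 < l →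
      0 ≤ N0 a Υ lMT l / (Real.exp (g0 a Υ lMT l) - 1) := fun l hl =>
    div_nonneg (le_trans ha.le (N0_ge ha hΥ hMT hl)) (expg_sub_one_pos ha hΥ hMT hl).le
  constructor
  · intro l hl _
    rw [Weq l hl]
    exact mul_nonneg (A0_nonneg hMT hl) (hB0nn l hl)
  · intro x hx y hy hxy
    obtain ⟨hx1, hx2⟩ := hx
    obtain ⟨hy1, hy2⟩ := hy
    rw [hc] at hx2 hy2
    have hx3 := hmem x hx1 hx2
    have hy3 := hmem y hy1 hy2
    rw [Weq x hx1, Weq y hy1]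
    have hA := antitoneOn_A0 hMT hx3 hy3 hxy
    have hN := antitoneOn_N0 ha hΥ hMT hx3 hy3 hxy
    have hg := monotoneOn_g0 ha hΥ hMT hx3 hy3 hxy
    have hDx := expg_sub_one_pos ha hΥ hMT hx1
    have hNx : 0 ≤ N0 a Υ lMT x := le_trans ha.le (N0_ge ha hΥ hMT hx1)
    have hB : N0 a Υ lMT y / (Real.exp (g0 a Υ lMT y) - 1)
        ≤ N0 a Υ lMT x / (Real.exp (g0 a Υ lMT x) - 1) := by
      apply div_le_div₀ hNx hN hDx
      have := Real.exp_le_exp.2 hg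
      linarith
    exact mul_le_mul hA hB (hB0nn y hy1) (A0_nonneg hMT hx1)
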